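/- Let ℓ_1, …, ℓ_n, ℓ_{n+1} be lines in ℝ², each given as the zero set of a non-constant affine functional. Then the number of connected components of ℝ² \ (ℓ_1 ∪ ⋯ ∪ ℓ_{n+1}) is at most the number of connected components of ℝ² \ (ℓ_1 ∪ ⋯ ∪ ℓ_n) plus n + 1. -/

import Mathlib

open Real

/-- The complement in `ℝ²` of the union of the `n` lines
`{x | a i 0 * x 0 + a i 1 * x 1 + b i = 0}`. -/
def lineCompl (n : ℕ) (a : Fin n → Fin 2 → ℝ) (b : Fin n → ℝ) : Set (Fin 2 → ℝ) :=
  {x | ∀ i, a i 0 * x 0 + a i 1 * x 1 + b i ≠ 0}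

/-- The set of connected components of a subset `S` of `ℝ²`. -/
def componentsIn (S : Set (Fin 2 → ℝ)) : Set (Set (Fin 2 → ℝ)) :=
  {C | ∃ x ∈ S, C = connectedComponentIn S x}

namespace LineArr

/-- The open "region" with sign pattern `t` for a family `F` of functions. -/
def reg {X ι : Type*} (F : ι → X → ℝ) (t : ι → Bool) : Set X :=
  {x | ∀ i, F i x ≠ 0 ∧ (0 < F i x ↔ t i = true)}

/-- Realizable sign vectors. -/
def rlz {X ι : Type*} (F : ι → X → ℝ) : Set (ι → Bool) :=
  {t | (reg F t).Nonempty}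

lemma comb_pos {α β p q : ℝ} (hα : 0 ≤ α) (hβ : 0 ≤ β) (h : α + β = 1)
    (hp : 0 < p) (hq : 0 < q) : 0 < α * p + β * q := by
  rcases eq_or_lt_of_le hα with h' | h'
  · have : β = 1 := by linarith
    simp [← h', this, hq]
  · nlinarith [mul_nonneg hβ hq.le]

lemma comb_neg {α β p q : ℝ} (hα : 0 ≤ α) (hβ : 0 ≤ β) (h : α + β = 1)
    (hp : p < 0) (hq : q < 0) : α * p + β * q < 0 := by
  have := comb_pos hα hβ h (neg_pos.mpr hp) (neg_pos.mpr hq); linarith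

/-- Sign constancy on preconnected sets. -/
lemma sign_const {X : Type*} [TopologicalSpace X] {s : Set X} (hs : IsPreconnected s)
    {g : X → ℝ} (hg : Continuous g) (h0 : ∀ z ∈ s, g z ≠ 0) {x y : X}
    (hx : x ∈ s) (hy : y ∈ s) : (0 < g x ↔ 0 < g y) := by
  constructor
  · intro h
    by_contra h'
    have hy' : g y < 0 := lt_of_le_of_ne (not_lt.mp h') (h0 y hy)
    obtain ⟨z, hz, hz0⟩ := hs.intermediate_value hy hx hg.continuousOn
      (Set.mem_Icc.mpr ⟨hy'.le, h.le⟩)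
    exact h0 z hz hz0
  · intro h
    by_contra h'
    have hx' : g x < 0 := lt_of_le_of_ne (not_lt.mp h') (h0 x hx)
    obtain ⟨z, hz, hz0⟩ := hs.intermediate_value hx hy hg.continuousOn
      (Set.mem_Icc.mpr ⟨hx'.le, h.le⟩)
    exact h0 z hz hz0

lemma snoc_count (n : ℕ) (S : Set (Fin (n + 1) → Bool)) :
    S.ncard ≤ ((fun s => fun j : Fin n => s j.castSucc) '' S).ncard
      + {t : Fin n → Bool | Fin.snoc t true ∈ S ∧ Fin.snoc t false ∈ S}.ncard := by
  classical
  set res : (Fin (n + 1) → Bool) → (Fin n → Bool) := fun s j => s j.castSucc with hres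
  set D := {t : Fin n → Bool | Fin.snoc t true ∈ S ∧ Fin.snoc t false ∈ S} with hD
  have key : ∀ s : Fin (n + 1) → Bool, Fin.snoc (res s) (s (Fin.last n)) = s :=
    fun s => Fin.snoc_init_self s
  set φ : (Fin (n + 1) → Bool) → (Fin n → Bool) × Bool :=
    fun s => (res s, s (Fin.last n) && decide (Fin.snoc (res s) false ∈ S)) with hφ
  set E : Set ((Fin n → Bool) × Bool) :=
    ((res '' S) ×ˢ {false}) ∪ (D ×ˢ {true}) with hE
  have hmaps : ∀ s ∈ S, φ s ∈ E := by
    intro s hs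
    by_cases hb : (s (Fin.last n) && decide (Fin.snoc (res s) false ∈ S)) = true
    · obtain ⟨h1, h2⟩ := Bool.and_eq_true_iff.mp hb
      have hsnocT : Fin.snoc (res s) true ∈ S := by rw [← h1, key s]; exact hs
      exact Set.mem_union_right _
        (Set.mem_prod.mpr ⟨⟨hsnocT, of_decide_eq_true h2⟩, hb⟩)
    · exact Set.mem_union_left _
        (Set.mem_prod.mpr ⟨⟨s, hs, rfl⟩, Bool.eq_false_iff.mpr hb⟩)
  have main : ∀ u u' : Fin (n + 1) → Bool, u ∈ S → u' ∈ S → res u = res u' →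
      u (Fin.last n) = true → u' (Fin.last n) = false →
      (u (Fin.last n) && decide (Fin.snoc (res u) false ∈ S))
        = (u' (Fin.last n) && decide (Fin.snoc (res u') false ∈ S)) → False := by
    intro u u' hu hu' hru h1 h2 hdd
    have hsS : Fin.snoc (res u) false ∈ S := by
      rw [hru, ← h2, key u']; exact hu'
    rw [h1, h2, decide_eq_true hsS] at hdd
    simp at hdd
  have hinj : Set.InjOn φ S := by
    intro s hs s' hs' h
    have hr : res s = res s' := congrArg Prod.fst h
    have hd := congrArg Prod.snd h
    simp only [hφ] at hd
    by_cases hl : s (Fin.last n) = s' (Fin.last n)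
    · rw [← key s, ← key s', hr, hl]
    · exfalso
      cases h1 : s (Fin.last n) with
      | true =>
        have h2 : s' (Fin.last n) = false := by
          cases hb : s' (Fin.last n)
          · rfl
          · exact absurd (h1.trans hb.symm) hl
        exact main s s' hs hs' hr h1 h2 hd
      | false =>
        have h2 : s' (Fin.last n) = true := by
          cases hb : s' (Fin.last n)
          · exact absurd (h1.trans hb.symm) hl
          · rfl
        exact main s' s hs' hs hr.symm h2 h1 hd.symm
  have h1 : S.ncard ≤ E.ncard :=
    Set.ncard_le_ncard_of_injOn φ hmaps hinj (Set.toFinite E)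
  have h2 : E.ncard ≤ ((res '' S) ×ˢ ({false} : Set Bool)).ncard
      + (D ×ˢ ({true} : Set Bool)).ncard := Set.ncard_union_le _ _
  have h3 : ∀ (A : Set (Fin n → Bool)) (c : Bool), (A ×ˢ ({c} : Set Bool)).ncard = A.ncard := by
    intro A c
    have hAc : A ×ˢ ({c} : Set Bool) = (fun x => (x, c)) '' A := by
      ext p
      constructor
      · rintro ⟨hp1, hp2⟩
        exact ⟨p.1, hp1, by rw [Prod.ext_iff]; exact ⟨rfl, (Set.mem_singleton_iff.mp hp2).symm⟩⟩
      · rintro ⟨x, hx, rfl⟩; exact ⟨hx, rfl⟩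
    rw [hAc, Set.ncard_image_of_injective _ (fun x y h => congrArg Prod.fst h)]
  calc S.ncard ≤ E.ncard := h1
    _ ≤ _ := h2
    _ = (res '' S).ncard + D.ncard := by rw [h3, h3]

/-- 1-D sign-vector bound: `m` affine functions on `ℝ` realize at most `m+1` sign vectors. -/
lemma one_dim (m : ℕ) (F : Fin m → ℝ → ℝ) (hF : ∀ i, ∃ c d, ∀ τ, F i τ = c * τ + d) :
    (rlz F).ncard ≤ m + 1 := by
  induction m with
  | zero =>
    have h1 : (rlz F).ncard ≤ (Set.univ : Set (Fin 0 → Bool)).ncard :=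
      Set.ncard_le_ncard (Set.subset_univ _) (Set.toFinite _)
    have h2 : (Set.univ : Set (Fin 0 → Bool)).ncard = 1 := by
      rw [Set.ncard_univ, Nat.card_eq_fintype_card]; simp
    omega
  | succ m ih =>
    have haff : ∀ (i : Fin (m + 1)) (lam mu τ τ' : ℝ), lam + mu = 1 →
        F i (lam * τ + mu * τ') = lam * F i τ + mu * F i τ' := by
      intro i lam mu τ τ' hs
      obtain ⟨c, d, hcd⟩ := hF i
      have hmu : mu = 1 - lam := by linarith
      subst hmu
      rw [hcd, hcd, hcd]; ring
    have hsub : ∀ t ∈ {t : Fin m → Bool |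
        Fin.snoc t true ∈ rlz F ∧ Fin.snoc t false ∈ rlz F},
        ∃ ρ, F (Fin.last m) ρ = 0 ∧
          ∀ j : Fin m, F j.castSucc ρ ≠ 0 ∧ (0 < F j.castSucc ρ ↔ t j = true) := by
      rintro t ⟨⟨xp, hxp⟩, ⟨xm, hxm⟩⟩
      have hp : 0 < F (Fin.last m) xp := by
        have := hxp (Fin.last m)
        simpa using this.2.mpr (by simp)
      have hq : F (Fin.last m) xm < 0 := by
        have := hxm (Fin.last m)
        have h2 : ¬ (0 < F (Fin.last m) xm) := by
          rw [this.2]; simp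
        exact lt_of_le_of_ne (not_lt.mp h2) this.1
      set p := F (Fin.last m) xp
      set q := -(F (Fin.last m) xm) with hqdef
      have hq' : 0 < q := by simp [hqdef]; linarith
      have hpq : 0 < p + q := by linarith
      set lam := q / (p + q) with hlam
      set mu := p / (p + q) with hmu
      have hlam0 : 0 ≤ lam := by positivity
      have hmu0 : 0 ≤ mu := by positivity
      have hsum : lam + mu = 1 := by rw [hlam, hmu, ← add_div, add_comm q p, div_self hpq.ne']
      refine ⟨lam * xp + mu * xm, ?_, ?_⟩
      · rw [haff _ _ _ _ _ hsum]
        have hxmval : F (Fin.last m) xm = -q := by rw [hqdef]; ring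
        rw [hxmval, hlam, hmu]
        field_simp
        have hpval : F (Fin.last m) xp = p := rfl
        rw [hpval]; ring
      · intro j
        have hj1 := hxp j.castSucc
        have hj2 := hxm j.castSucc
        rw [Fin.snoc_castSucc] at hj1 hj2
        rw [haff _ _ _ _ _ hsum]
        cases htj : t j with
        | true =>
          have h1 : 0 < F j.castSucc xp := hj1.2.mpr (by rw [htj])
          have h2 : 0 < F j.castSucc xm := hj2.2.mpr (by rw [htj])
          have := comb_pos hlam0 hmu0 hsum h1 h2
          exact ⟨ne_of_gt this, by simp [this]⟩
        | false =>
          have h1 : F j.castSucc xp < 0 := by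
            have : ¬ (0 < F j.castSucc xp) := by rw [hj1.2, htj]; simp
            exact lt_of_le_of_ne (not_lt.mp this) hj1.1
          have h2 : F j.castSucc xm < 0 := by
            have : ¬ (0 < F j.castSucc xm) := by rw [hj2.2, htj]; simp
            exact lt_of_le_of_ne (not_lt.mp this) hj2.1
          have := comb_neg hlam0 hmu0 hsum h1 h2
          exact ⟨ne_of_lt this, by simp [not_lt.mpr this.le, this]⟩
    have hD1 : {t : Fin m → Bool |
        Fin.snoc t true ∈ rlz F ∧ Fin.snoc t false ∈ rlz F}.ncard ≤ 1 := by
      rw [Set.ncard_le_one (Set.toFinite _)]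
      intro t ht t' ht'
      obtain ⟨ρ, hρ0, hρ⟩ := hsub t ht
      obtain ⟨ρ', hρ0', hρ'⟩ := hsub t' ht'
      obtain ⟨⟨xp, hxp⟩, ⟨xm, hxm⟩⟩ := ht
      have hp : 0 < F (Fin.last m) xp := by
        have := hxp (Fin.last m)
        simpa using this.2.mpr (by simp)
      have hq : F (Fin.last m) xm < 0 := by
        have := hxm (Fin.last m)
        have h2 : ¬ (0 < F (Fin.last m) xm) := by rw [this.2]; simp
        exact lt_of_le_of_ne (not_lt.mp h2) this.1
      obtain ⟨c, d, hcd⟩ := hF (Fin.last m)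
      have hc : c ≠ 0 := by
        intro hc0
        rw [hcd, hc0] at hp hq
        simp at hp hq; linarith
      have hρeq : ρ = ρ' := by
        rw [hcd] at hρ0 hρ0'
        have : c * ρ = c * ρ' := by linarith
        exact mul_left_cancel₀ hc this
      funext j
      have h1 := (hρ j).2
      have h2 := (hρ' j).2
      rw [← hρeq] at h2
      cases htj : t j <;> cases htj' : t' j <;> simp_all
    have hres : (fun s => fun j : Fin m => s j.castSucc) '' rlz F ⊆
        rlz (fun j : Fin m => F j.castSucc) := by
      rintro _ ⟨t, ⟨x, hx⟩, rfl⟩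
      exact ⟨x, fun j => hx j.castSucc⟩
    have hresn : ((fun s => fun j : Fin m => s j.castSucc) '' rlz F).ncard ≤
        (rlz (fun j : Fin m => F j.castSucc)).ncard :=
      Set.ncard_le_ncard hres (Set.toFinite _)
    have hih := ih (fun j : Fin m => F j.castSucc) (fun j => hF j.castSucc)
    calc (rlz F).ncard
        ≤ ((fun s => fun j : Fin m => s j.castSucc) '' rlz F).ncard
          + {t : Fin m → Bool | Fin.snoc t true ∈ rlz F ∧ Fin.snoc t false ∈ rlz F}.ncard :=
          snoc_count m (rlz F)
      _ ≤ (rlz (fun j : Fin m => F j.castSucc)).ncard + 1 := Nat.add_le_add hresn hD1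
      _ ≤ (m + 1) + 1 := Nat.add_le_add_right hih 1

/-- The affine functionals of an arrangement. -/
def Fm {m : ℕ} (a : Fin m → Fin 2 → ℝ) (b : Fin m → ℝ) : Fin m → (Fin 2 → ℝ) → ℝ :=
  fun i x => a i 0 * x 0 + a i 1 * x 1 + b i

variable {m : ℕ} {a : Fin m → Fin 2 → ℝ} {b : Fin m → ℝ}

lemma Fm_continuous (i : Fin m) : Continuous (Fm a b i) := by
  unfold Fm
  exact ((continuous_const.mul (continuous_apply 0)).add
    (continuous_const.mul (continuous_apply 1))).add continuous_const

lemma Fm_affine (i : Fin m) (lam mu : ℝ) (x y : Fin 2 → ℝ) (h : lam + mu = 1) :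
    Fm a b i (lam • x + mu • y) = lam * Fm a b i x + mu * Fm a b i y := by
  have hmu : mu = 1 - lam := by linarith
  subst hmu
  simp only [Fm, Pi.add_apply, Pi.smul_apply, smul_eq_mul]
  ring

lemma reg_convex (t : Fin m → Bool) : Convex ℝ (reg (Fm a b) t) := by
  intro x hx y hy lam mu hlam hmu hs i
  have hc := Fm_affine (a := a) (b := b) i lam mu x y hs
  obtain ⟨hx1, hx2⟩ := hx i
  obtain ⟨hy1, hy2⟩ := hy i
  cases ht : t i with
  | true =>
    have h1 : 0 < Fm a b i x := hx2.mpr ht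
    have h2 : 0 < Fm a b i y := hy2.mpr ht
    have := comb_pos hlam hmu hs h1 h2
    rw [← hc] at this
    exact ⟨ne_of_gt this, by simp [this, ht]⟩
  | false =>
    have h1 : Fm a b i x < 0 :=
      lt_of_le_of_ne (not_lt.mp (fun h => by simp [hx2.mp h] at ht)) hx1
    have h2 : Fm a b i y < 0 :=
      lt_of_le_of_ne (not_lt.mp (fun h => by simp [hy2.mp h] at ht)) hy1
    have := comb_neg hlam hmu hs h1 h2
    rw [← hc] at this
    exact ⟨ne_of_lt this, by simp [not_lt.mpr this.le, ht]⟩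

lemma comp_eq {x : Fin 2 → ℝ} (hx : x ∈ lineCompl m a b) :
    connectedComponentIn (lineCompl m a b) x
      = reg (Fm a b) (fun i => decide (0 < Fm a b i x)) := by
  have hregsub : reg (Fm a b) (fun i => decide (0 < Fm a b i x)) ⊆ lineCompl m a b :=
    fun y hy i => (hy i).1
  have hxreg : x ∈ reg (Fm a b) (fun i => decide (0 < Fm a b i x)) :=
    fun i => ⟨hx i, by simp⟩
  apply Set.Subset.antisymm
  · intro y hy
    have hyC : y ∈ lineCompl m a b := connectedComponentIn_subset _ _ hy
    intro i
    refine ⟨hyC i, ?_⟩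
    rw [decide_eq_true_eq]
    exact sign_const isPreconnected_connectedComponentIn (Fm_continuous i)
      (fun z hz => (connectedComponentIn_subset _ _ hz : z ∈ lineCompl m a b) i)
      hy (mem_connectedComponentIn hx)
  · exact ((reg_convex _).isPreconnected).subset_connectedComponentIn hxreg hregsub

lemma componentsIn_eq :
    componentsIn (lineCompl m a b) = reg (Fm a b) '' rlz (Fm a b) := by
  ext C
  constructor
  · rintro ⟨x, hx, rfl⟩
    exact ⟨fun i => decide (0 < Fm a b i x), ⟨x, fun i => ⟨hx i, by simp⟩⟩,
      (comp_eq hx).symm⟩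
  · rintro ⟨t, ⟨x, hxt⟩, rfl⟩
    have hxC : x ∈ lineCompl m a b := fun i => (hxt i).1
    refine ⟨x, hxC, ?_⟩
    have hsv : (fun i => decide (0 < Fm a b i x)) = t := by
      funext i
      have := (hxt i).2
      cases ht : t i <;> simp_all
    rw [comp_eq hxC, hsv]

lemma reg_injOn : Set.InjOn (reg (Fm a b)) (rlz (Fm a b)) := by
  rintro t ⟨x, hx⟩ t' _ heq
  have hx' : x ∈ reg (Fm a b) t' := heq ▸ hx
  funext i
  have h1 := (hx i).2
  have h2 := (hx' i).2
  cases ht : t i <;> cases ht' : t' i <;> simp_all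

lemma componentsIn_finite : (componentsIn (lineCompl m a b)).Finite := by
  rw [componentsIn_eq]
  exact (Set.toFinite (rlz (Fm a b))).image _

lemma componentsIn_ncard :
    (componentsIn (lineCompl m a b)).ncard = (rlz (Fm a b)).ncard := by
  rw [componentsIn_eq]
  exact Set.ncard_image_of_injOn reg_injOn

end LineArr

/-- Adding an `(n+1)`-st line to an arrangement of `n` lines adds at most `n + 1`
connected components to the complement. -/
theorem line_arrangement_inductive_step (n : ℕ) (a : Fin (n + 1) → Fin 2 → ℝ)
    (b : Fin (n + 1) → ℝ) (ha : ∀ i, a i ≠ 0) :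
    (componentsIn (lineCompl (n + 1) a b)).Finite ∧
    (componentsIn (lineCompl (n + 1) a b)).ncard ≤
      (componentsIn (lineCompl n (fun i => a i.castSucc) (fun i => b i.castSucc))).ncard
        + (n + 1) := by
  classical
  open LineArr in
  refine ⟨componentsIn_finite, ?_⟩
  have h1 : (componentsIn (lineCompl (n + 1) a b)).ncard = (rlz (Fm a b)).ncard :=
    LineArr.componentsIn_ncard
  have h2 : (componentsIn (lineCompl n (fun i => a i.castSucc) (fun i => b i.castSucc))).ncard
      = (rlz (Fm (fun i => a i.castSucc) (fun i => b i.castSucc))).ncard :=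
    LineArr.componentsIn_ncard
  have hFr : Fm (fun i : Fin n => a i.castSucc) (fun i : Fin n => b i.castSucc)
      = fun j : Fin n => Fm a b j.castSucc := rfl
  have hcount := snoc_count n (rlz (Fm a b))
  have hres : (fun s => fun j : Fin n => s j.castSucc) '' rlz (Fm a b) ⊆
      rlz (fun j : Fin n => Fm a b j.castSucc) := by
    rintro _ ⟨t, ⟨x, hx⟩, rfl⟩
    exact ⟨x, fun j => hx j.castSucc⟩
  have hresn : ((fun s => fun j : Fin n => s j.castSucc) '' rlz (Fm a b)).ncard ≤
      (rlz (fun j : Fin n => Fm a b j.castSucc)).ncard :=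
    Set.ncard_le_ncard hres (Set.toFinite _)
  -- the new line, parametrized
  set aL : Fin 2 → ℝ := a (Fin.last n) with haL
  set bL : ℝ := b (Fin.last n) with hbL
  have hq : (0:ℝ) < aL 0 ^ 2 + aL 1 ^ 2 := by
    obtain ⟨j, hj⟩ := Function.ne_iff.mp (ha (Fin.last n))
    have hj' : aL j ≠ 0 := hj
    fin_cases j
    · nlinarith [sq_nonneg (aL 1), sq_nonneg (aL 0),
        lt_of_le_of_ne (sq_nonneg (aL 0)) (Ne.symm (pow_ne_zero 2 hj'))]
    · nlinarith [sq_nonneg (aL 0),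
        lt_of_le_of_ne (sq_nonneg (aL 1)) (Ne.symm (pow_ne_zero 2 hj'))]
  set Q : ℝ := aL 0 ^ 2 + aL 1 ^ 2 with hQ
  set pt : ℝ → (Fin 2 → ℝ) :=
    fun τ => ![-bL * aL 0 / Q - τ * aL 1, -bL * aL 1 / Q + τ * aL 0] with hpt
  set G : Fin n → ℝ → ℝ := fun j τ => Fm a b j.castSucc (pt τ) with hG
  have hGaff : ∀ j, ∃ c d, ∀ τ, G j τ = c * τ + d := by
    intro j
    refine ⟨a j.castSucc 0 * (-aL 1) + a j.castSucc 1 * aL 0, G j 0, fun τ => ?_⟩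
    simp only [hG, Fm, hpt, Matrix.cons_val_zero, Matrix.cons_val_one, Matrix.head_cons]
    ring
  have hDG : {t : Fin n → Bool | Fin.snoc t true ∈ rlz (Fm a b)
      ∧ Fin.snoc t false ∈ rlz (Fm a b)} ⊆ rlz G := by
    rintro t ⟨⟨xp, hxp⟩, ⟨xm, hxm⟩⟩
    have hp : 0 < Fm a b (Fin.last n) xp := by
      have := hxp (Fin.last n)
      simpa using this.2.mpr (by simp)
    have hm : Fm a b (Fin.last n) xm < 0 := by
      have := hxm (Fin.last n)
      have h2 : ¬ (0 < Fm a b (Fin.last n) xm) := by rw [this.2]; simp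
      exact lt_of_le_of_ne (not_lt.mp h2) this.1
    set p : ℝ := Fm a b (Fin.last n) xp with hpdef
    set q : ℝ := -(Fm a b (Fin.last n) xm) with hqdef
    have hq' : (0:ℝ) < q := by rw [hqdef]; linarith
    have hpq : (0:ℝ) < p + q := by linarith
    set lam : ℝ := q / (p + q) with hlam
    set mu : ℝ := p / (p + q) with hmu
    have hlam0 : 0 ≤ lam := by positivity
    have hmu0 : 0 ≤ mu := by positivity
    have hsum : lam + mu = 1 := by rw [hlam, hmu, ← add_div, add_comm q p, div_self hpq.ne']
    set z : Fin 2 → ℝ := lam • xp + mu • xm with hz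
    -- z is in the region of the restricted arrangement
    have hxp' : xp ∈ reg (Fm (fun i : Fin n => a i.castSucc) (fun i : Fin n => b i.castSucc)) t := by
      intro j
      have := hxp j.castSucc
      rwa [Fin.snoc_castSucc] at this
    have hxm' : xm ∈ reg (Fm (fun i : Fin n => a i.castSucc) (fun i : Fin n => b i.castSucc)) t := by
      intro j
      have := hxm j.castSucc
      rwa [Fin.snoc_castSucc] at this
    have hzreg := reg_convex t hxp' hxm' hlam0 hmu0 hsum
    -- z lies on the new line
    have hz0 : Fm a b (Fin.last n) z = 0 := by
      rw [hz, Fm_affine _ _ _ _ _ hsum]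
      have hxmval : Fm a b (Fin.last n) xm = -q := by rw [hqdef]; ring
      have hxpval : Fm a b (Fin.last n) xp = p := rfl
      rw [hxmval, hxpval, hlam, hmu]
      field_simp
      ring
    have hz0' : aL 0 * z 0 + aL 1 * z 1 + bL = 0 := hz0
    -- the parameter of z on the new line
    set τz : ℝ := (aL 0 * z 1 - aL 1 * z 0) / Q with hτz
    have hptz : pt τz = z := by
      funext j
      fin_cases j
      · show pt τz 0 = z 0
        rw [hpt]
        simp only [Matrix.cons_val_zero]
        rw [hτz, hQ]
        rw [show bL = -(aL 0 * z 0) - aL 1 * z 1 by linarith]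
        have h0 : aL 0 ^ 2 + aL 1 ^ 2 ≠ 0 := hq.ne'
        have h0' : aL 1 ^ 2 + aL 0 ^ 2 ≠ 0 := by rw [add_comm]; exact h0
        field_simp
        ring
      · show pt τz 1 = z 1
        rw [hpt]
        simp only [Matrix.cons_val_one, Matrix.head_cons, Matrix.cons_val_zero]
        rw [hτz, hQ]
        rw [show bL = -(aL 0 * z 0) - aL 1 * z 1 by linarith]
        have h0 : aL 0 ^ 2 + aL 1 ^ 2 ≠ 0 := hq.ne'
        have h0' : aL 1 ^ 2 + aL 0 ^ 2 ≠ 0 := by rw [add_comm]; exact h0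
        field_simp
        ring
    refine ⟨τz, fun j => ?_⟩
    have : G j τz = Fm a b j.castSucc z := by rw [hG]; simp only; rw [hptz]
    rw [this]
    exact hzreg j
  have hDn : {t : Fin n → Bool | Fin.snoc t true ∈ rlz (Fm a b)
      ∧ Fin.snoc t false ∈ rlz (Fm a b)}.ncard ≤ n + 1 :=
    le_trans (Set.ncard_le_ncard hDG (Set.toFinite _)) (one_dim n G hGaff)
  rw [h1, h2, hFr]
  linarith [hcount, hresn, hDn]
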